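/- arXiv:math/0310173 — 5 statements merged into one kernel-verified Lean document; each statement's English description precedes it below -/
import Mathlib

section
/- Let A be a commutative Noetherian Poisson algebra over a field k of characteristic 0. Then the nilradical J ⊆ A is a Poisson ideal: {j, a} ∈ J for all j ∈ J and a ∈ A. -/
/-- A Poisson bracket on a commutative `k`-algebra `A`: a `k`-bilinear,
skew-symmetric operation satisfying the Leibniz rule and the Jacobi identity. -/
def IsPoissonBracket (k : Type*) {A : Type*} [CommRing k] [CommRing A] [Algebra k A]
    (b : A → A → A) : Prop :=
  (∀ a : A, IsLinearMap k (b a)) ∧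
  (∀ a : A, IsLinearMap k (fun x => b x a)) ∧
  (∀ x y : A, b x y = - b y x) ∧
  (∀ a x y : A, b a (x * y) = b a x * y + b a y * x) ∧
  (∀ a x y : A, b a (b x y) + b x (b y a) + b y (b a x) = 0)


private lemma cancel_natCast {k A : Type*} [Field k] [CharZero k] [CommRing A]
    [Algebra k A] {n : ℕ} (hn : n ≠ 0) {y : A} (h : (n : A) * y = 0) : y = 0 := by
  have h' : algebraMap k A (n : k) * y = 0 := by rw [map_natCast]; exact h
  have hk : ((n : k))⁻¹ * (n : k) = 1 := inv_mul_cancel₀ (Nat.cast_ne_zero.mpr hn)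
  calc y = algebraMap k A (((n : k))⁻¹ * (n : k)) * y := by rw [hk, map_one, one_mul]
    _ = algebraMap k A ((n : k))⁻¹ * (algebraMap k A (n : k) * y) := by
        rw [map_mul, mul_assoc]
    _ = 0 := by rw [h', mul_zero]

private lemma aux_deriv_pow {A : Type*} [CommRing A] (D : A → A)
    (hleib : ∀ u v : A, D (u * v) = D u * v + D v * u) (x : A) :
    ∀ n : ℕ, D (x ^ (n + 1)) = ((n : A) + 1) * (x ^ n * D x) := by
  intro n
  induction n with
  | zero => simp
  | succ m ih =>
      have : x ^ (m + 2) = x * x ^ (m + 1) := by ring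
      rw [this, hleib, ih]
      push_cast
      ring

private lemma deriv_nilpotent {k A : Type*} [Field k] [CharZero k] [CommRing A]
    [Algebra k A] (D : A → A) (hzero : D 0 = 0)
    (hleib : ∀ u v : A, D (u * v) = D u * v + D v * u)
    {x : A} (hx : IsNilpotent x) : IsNilpotent (D x) := by
  obtain ⟨n, hn⟩ := hx
  have hm : x ^ (n + 1) = 0 := by rw [pow_succ, hn, zero_mul]
  have key : ∀ j i : ℕ, i + j = n → x ^ i * (D x) ^ (2 * j + 1) = 0 := by
    intro j
    induction j with
    | zero =>
        intro i hi
        have h0 : D (x ^ (n + 1)) = 0 := by rw [hm, hzero]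
        rw [aux_deriv_pow D hleib] at h0
        have := cancel_natCast (k := k) (n := n + 1) (Nat.succ_ne_zero n)
          (y := x ^ n * D x) (by push_cast; linear_combination h0)
        subst hi
        simpa using this
    | succ j ih =>
        intro i hi
        have h : x ^ (i + 1) * (D x) ^ (2 * j + 1) = 0 := by
          apply ih; omega
        have e1 : D (x ^ (i + 1) * (D x) ^ (2 * j + 1)) = 0 := by rw [h, hzero]
        have e2 : D (x ^ (i + 1)) = ((i : A) + 1) * (x ^ i * D x) :=
          aux_deriv_pow D hleib x i
        have e3 : D ((D x) ^ (2 * j + 1)) =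
            ((2 * j : A) + 1) * ((D x) ^ (2 * j) * D (D x)) := by
          have := aux_deriv_pow D hleib (D x) (2 * j)
          push_cast at this ⊢
          exact this
        have e4 : ((i : A) + 1) * (x ^ i * D x) * (D x) ^ (2 * j + 1)
            + ((2 * j : A) + 1) * ((D x) ^ (2 * j) * D (D x)) * x ^ (i + 1) = 0 := by
          rw [← e2, ← e3, ← hleib]; exact e1
        have e5 : ((i : A) + 1) * (x ^ i * (D x) ^ (2 * (j + 1) + 1)) = 0 := by
          linear_combination (D x) * e4
            - (((2 * j : A) + 1) * D (D x)) * h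
        exact cancel_natCast (k := k) (n := i + 1) (Nat.succ_ne_zero i)
          (by push_cast; linear_combination e5)
  refine ⟨2 * n + 1, ?_⟩
  have := key n 0 (by omega)
  simpa using this

/-- The nilradical of a Noetherian Poisson algebra over a field of characteristic
zero is a Poisson ideal. -/
theorem nilradical_isPoissonIdeal {k A : Type*} [Field k] [CharZero k] [CommRing A]
    [Algebra k A] [IsNoetherianRing A] (b : A → A → A) (hb : IsPoissonBracket k b) :
    ∀ x ∈ nilradical A, ∀ a : A, b x a ∈ nilradical A := by
  intro x hx a
  rw [mem_nilradical] at hx ⊢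
  obtain ⟨hlin, _, hskew, hleib, _⟩ := hb
  have hD : IsNilpotent (b a x) := by
    apply deriv_nilpotent (k := k) (D := b a)
    · simpa using (hlin a).map_smul (0 : k) 0
    · exact hleib a
    · exact hx
  rw [hskew x a]
  exact hD.neg
end

section
/- Let K₀ ⊆ K be a finite separable field extension, K = K₀(x̄) with minimal polynomial P of x̄ over K₀. Let A be a discrete valuation ring with residue field K, valuation v, and uniformizer π, and let x ∈ A be a lift of x̄. Then v(P(x)) = 1 or v(P(x+π)) = 1, where P is lifted coefficient-wise via some section; more precisely, P(x+π) ≡ P(x) + P'(x)π mod π², and since P'(x̄) ≠ 0, at least one of P(x), P(x+π) has valuation exactly 1. -/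
theorem addVal_eq_one_of_dvd_not_sq {A : Type*} [CommRing A] [IsDomain A]
    [IsDiscreteValuationRing A] {π a : A} (hπ : Irreducible π)
    (h1 : π ∣ a) (h2 : ¬ π ^ 2 ∣ a) :
    IsDiscreteValuationRing.addVal A a = 1 := by
  obtain ⟨b, rfl⟩ := h1
  have hb : IsUnit b := by
    by_contra hb
    have : b ∈ IsLocalRing.maximalIdeal A := hb
    rw [hπ.maximalIdeal_eq, Ideal.mem_span_singleton] at this
    obtain ⟨c, rfl⟩ := this
    exact h2 ⟨c, by ring⟩
  obtain ⟨u, rfl⟩ := hb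
  exact IsDiscreteValuationRing.addVal_def (π * u) u hπ 1 (by rw [pow_one, mul_comm])

/-- Let `A` be a discrete valuation ring with uniformizer `π` and residue field `K`,
let `K₀ ⊆ K` be a subfield, `x ∈ A` a lift of `x̄ ∈ K` with `x̄` separable over `K₀`,
and let `P ∈ A[T]` be a coefficient-wise lift of the minimal polynomial of `x̄`
over `K₀`. Then `v(P(x)) = 1` or `v(P(x + π)) = 1`. -/
theorem val_eval_lift_minpoly {A : Type*} [CommRing A] [IsDomain A]
    [IsDiscreteValuationRing A] (π : A) (hπ : Irreducible π)
    (K₀ : Subfield (IsLocalRing.ResidueField A)) (x : A)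
    (hsep : (minpoly K₀ (IsLocalRing.residue A x)).Separable)
    (P : Polynomial A)
    (hP : P.map (IsLocalRing.residue A)
      = (minpoly K₀ (IsLocalRing.residue A x)).map
          (algebraMap K₀ (IsLocalRing.ResidueField A))) :
    IsDiscreteValuationRing.addVal A (P.eval x) = 1 ∨
      IsDiscreteValuationRing.addVal A (P.eval (x + π)) = 1 := by
  have hres : ∀ y : A, IsLocalRing.residue A (P.eval y)
      = Polynomial.aeval (IsLocalRing.residue A y) (minpoly K₀ (IsLocalRing.residue A x)) := by
    intro y
    rw [← Polynomial.eval₂_at_apply, ← Polynomial.eval_map, hP, Polynomial.eval_map,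
      Polynomial.aeval_def]
  have hπ0 : IsLocalRing.residue A π = 0 := by
    rw [IsLocalRing.residue_eq_zero_iff, hπ.maximalIdeal_eq, Ideal.mem_span_singleton]
  have hxπ : IsLocalRing.residue A (x + π) = IsLocalRing.residue A x := by
    simp [map_add, hπ0]
  have hdvd : ∀ y : A, IsLocalRing.residue A y = IsLocalRing.residue A x → π ∣ P.eval y := by
    intro y hy
    rw [← Ideal.mem_span_singleton, ← hπ.maximalIdeal_eq, ← IsLocalRing.residue_eq_zero_iff,
      hres, hy, minpoly.aeval]
  have hd : IsUnit (P.derivative.eval x) := by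
    by_contra h
    have h0 : IsLocalRing.residue A (P.derivative.eval x) = 0 :=
      (IsLocalRing.residue_eq_zero_iff _).2 h
    rw [← Polynomial.eval₂_at_apply, ← Polynomial.eval_map, ← Polynomial.derivative_map, hP,
      Polynomial.derivative_map, Polynomial.eval_map] at h0
    refine hsep.eval₂_derivative_ne_zero (algebraMap K₀ (IsLocalRing.ResidueField A)) ?_ h0
    rw [← Polynomial.aeval_def]
    exact minpoly.aeval _ _
  obtain ⟨k, hk⟩ := P.binomExpansion x π
  have key : ¬ (π ^ 2 ∣ P.eval x ∧ π ^ 2 ∣ P.eval (x + π)) := by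
    rintro ⟨h2, h3⟩
    have hdd : π ^ 2 ∣ P.derivative.eval x * π := by
      have : P.derivative.eval x * π = P.eval (x + π) - P.eval x - k * π ^ 2 := by
        rw [hk]; ring
      rw [this]
      exact dvd_sub (dvd_sub h3 h2) (Dvd.intro_left k rfl)
    rw [pow_two] at hdd
    have : π ∣ P.derivative.eval x := (mul_dvd_mul_iff_right hπ.ne_zero).mp hdd
    exact hπ.not_isUnit (isUnit_of_dvd_unit this hd)
  rcases not_and_or.mp key with h | h
  · exact Or.inl (addVal_eq_one_of_dvd_not_sq hπ (hdvd x rfl) h)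
  · exact Or.inr (addVal_eq_one_of_dvd_not_sq hπ (hdvd _ hxπ) h)
end

section
/- Let A be a regular local ring (more generally, an integrally closed Noetherian domain). Then the formal power series ring A[[t]] is integrally closed in its fraction field. -/
open PowerSeries

section Aux

variable {A : Type*} [CommRing A] [IsDomain A] [IsNoetherianRing A] [IsIntegrallyClosed A]
variable {K : Type*} [Field K] [Algebra A K] [IsFractionRing A K]

/-- Almost integral elements of the fraction field of a Noetherian integrally closed
domain are in the ring. -/
private lemma aux_almost_integral (c a : K) (hc : c ≠ 0)
    (h : ∀ k : ℕ, ∃ b : A, c * a ^ k = algebraMap A K b) :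
    ∃ b : A, algebraMap A K b = a := by
  apply IsIntegrallyClosed.isIntegral_iff.mp
  -- a ^ k ∈ span A {c⁻¹}
  have hpow : ∀ k : ℕ, a ^ k ∈ Submodule.span A {c⁻¹} := by
    intro k
    obtain ⟨b, hb⟩ := h k
    have : a ^ k = b • c⁻¹ := by
      rw [Algebra.smul_def]
      field_simp [← hb]
      linear_combination hb
    rw [this]
    exact Submodule.smul_mem _ _ (Submodule.mem_span_singleton_self _)
  have hle : Subalgebra.toSubmodule (Algebra.adjoin A {a}) ≤ Submodule.span A {c⁻¹} := by
    intro x hx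
    rw [Subalgebra.mem_toSubmodule, Algebra.adjoin_singleton_eq_range_aeval] at hx
    obtain ⟨p, hp⟩ := hx
    rw [← hp]
    show Polynomial.aeval a p ∈ _
    rw [Polynomial.aeval_eq_sum_range]
    exact Submodule.sum_mem _ fun i _ => Submodule.smul_mem _ _ (hpow i)
  have hfg : (Subalgebra.toSubmodule (Algebra.adjoin A {a})).FG := by
    have hN : (Submodule.span A {c⁻¹}).FG := ⟨{c⁻¹}, by simp⟩
    have hNoeth : IsNoetherian A (Submodule.span A {c⁻¹}) :=
      isNoetherian_of_fg_of_noetherian _ hN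
    have h1 : ((Subalgebra.toSubmodule (Algebra.adjoin A {a})).comap
        (Submodule.span A {c⁻¹}).subtype).FG := IsNoetherian.noetherian _
    have h2 := h1.map (Submodule.span A {c⁻¹}).subtype
    rwa [Submodule.map_comap_subtype, inf_eq_right.mpr hle] at h2
  exact IsIntegral.of_mem_of_fg _ hfg _ (Algebra.self_mem_adjoin_singleton A a)

/-- If `d ≠ 0` and `d * y ^ k` has coefficients in `A` for all `k`, then
the constant coefficient of `y` is in `A`. -/
private lemma aux_constantCoeff (d y : PowerSeries K) (hd : d ≠ 0)
    (h : ∀ k : ℕ, ∃ b : PowerSeries A, d * y ^ k = PowerSeries.map (algebraMap A K) b) :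
    ∃ b : A, algebraMap A K b = constantCoeff (R := K) y := by
  have hex : ∃ n, coeff (R := K) n d ≠ 0 := by
    by_contra hcon
    push_neg at hcon
    exact hd (PowerSeries.ext fun n => by simpa using hcon n)
  classical
  let r := Nat.find hex
  have hr : coeff (R := K) r d ≠ 0 := Nat.find_spec hex
  have hlt : ∀ m < r, coeff (R := K) m d = 0 := fun m hm => by
    by_contra hc; exact (Nat.find_min hex hm) hc
  apply aux_almost_integral (coeff (R := K) r d) _ hr
  intro k
  obtain ⟨b, hb⟩ := h k
  refine ⟨coeff (R := A) r b, ?_⟩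
  have key : coeff (R := K) r (d * y ^ k) = coeff (R := K) r d * (constantCoeff (R := K) y) ^ k := by
    rw [PowerSeries.coeff_mul]
    rw [Finset.sum_eq_single (r, 0)]
    · simp [← map_pow, coeff_zero_eq_constantCoeff]
    · rintro ⟨i, j⟩ hij hne
      rw [Finset.HasAntidiagonal.mem_antidiagonal] at hij
      have : i < r := by
        rcases lt_or_ge i r with h' | h'
        · exact h'
        · exfalso
          have : i = r := le_antisymm (by omega) h'
          subst this
          exact hne (by simp; omega)
      simp [hlt i this]
    · intro hne
      exfalso
      exact hne (by simp [Finset.mem_antidiagonal])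
  rw [← key, hb, PowerSeries.coeff_map]

/-- The shift step: if `d * y ^ k` is `A`-integral for all `k` and the constant coefficient
of `y` lies in `A`, then the same almost-integrality holds for the shifted series. -/
private lemma aux_step (d y : PowerSeries K)
    (h : ∀ k : ℕ, ∃ b : PowerSeries A, d * y ^ k = PowerSeries.map (algebraMap A K) b)
    (a0 : A) (ha0 : algebraMap A K a0 = constantCoeff (R := K) y) :
    ∀ k : ℕ, ∃ b : PowerSeries A,
      d * (PowerSeries.mk fun n => coeff (R := K) (n + 1) y) ^ k
        = PowerSeries.map (algebraMap A K) b := by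
  intro k
  set y' : PowerSeries K := PowerSeries.mk fun n => coeff (R := K) (n + 1) y with hy'
  have hdecomp : y - C (R := K) (constantCoeff (R := K) y) = X * y' := by
    ext n
    cases n with
    | zero => simp [hy']
    | succ n => simp [hy', coeff_succ_X_mul, PowerSeries.coeff_C]
  -- choose b_i for each i
  choose b hbspec using h
  -- the combination in A
  let btilde : PowerSeries A :=
    ∑ m ∈ Finset.range (k + 1), (-1) ^ (m + k) * b m * (C (R := A) a0) ^ (k - m) * (k.choose m : PowerSeries A)
  have hmapbtilde : PowerSeries.map (algebraMap A K) btilde = d * (y - C (R := K) (constantCoeff (R := K) y)) ^ k := by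
    rw [sub_pow, Finset.mul_sum]
    rw [map_sum]
    apply Finset.sum_congr rfl
    intro m hm
    rw [map_mul, map_mul, map_mul, map_pow, map_pow, map_natCast, map_neg, map_one,
      PowerSeries.map_C, ha0, ← hbspec m]
    ring
  have hX : (X : PowerSeries K) ^ k * (d * y' ^ k) = PowerSeries.map (algebraMap A K) btilde := by
    rw [hmapbtilde]
    rw [hdecomp, mul_pow]
    ring
  have hdvd : (X : PowerSeries A) ^ k ∣ btilde := by
    rw [PowerSeries.X_pow_dvd_iff]
    intro m hm
    have h0 : coeff (R := K) m (PowerSeries.map (algebraMap A K) btilde) = 0 := by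
      rw [← hX]
      have : (X : PowerSeries K) ^ k ∣ X ^ k * (d * y' ^ k) := Dvd.intro _ rfl
      exact (PowerSeries.X_pow_dvd_iff.mp this) m hm
    rw [PowerSeries.coeff_map] at h0
    exact IsFractionRing.injective A K (by simpa using h0)
  obtain ⟨b', hb'⟩ := hdvd
  refine ⟨b', ?_⟩
  have : (X : PowerSeries K) ^ k * (d * y' ^ k)
      = (X : PowerSeries K) ^ k * PowerSeries.map (algebraMap A K) b' := by
    rw [hX, hb', map_mul, map_pow, PowerSeries.map_X]
  exact mul_left_cancel₀ (pow_ne_zero _ PowerSeries.X_ne_zero) this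

/-- All coefficients are in `A`. -/
private lemma aux_coeff (d : PowerSeries K) (hd : d ≠ 0) :
    ∀ (m : ℕ) (y : PowerSeries K),
      (∀ k : ℕ, ∃ b : PowerSeries A, d * y ^ k = PowerSeries.map (algebraMap A K) b) →
      ∃ b : A, algebraMap A K b = coeff (R := K) m y := by
  intro m
  induction m with
  | zero =>
    intro y h
    simpa [coeff_zero_eq_constantCoeff] using aux_constantCoeff d y hd h
  | succ m ih =>
    intro y h
    obtain ⟨a0, ha0⟩ := aux_constantCoeff d y hd h
    have := ih (PowerSeries.mk fun n => coeff (R := K) (n + 1) y) (aux_step d y h a0 ha0)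
    simpa using this

end Aux

private lemma aux_main {A : Type*} [CommRing A] [IsDomain A] [IsNoetherianRing A]
    [IsIntegrallyClosed A]
    {K : Type*} [Field K] [Algebra A K] [IsFractionRing A K]
    {F : Type*} [Field F] [Algebra (PowerSeries A) F] [IsFractionRing (PowerSeries A) F]
    {L : Type*} [Field L] [Algebra (PowerSeries K) L] [IsFractionRing (PowerSeries K) L]
    (z : F) (hz : IsIntegral (PowerSeries A) z) :
    ∃ y : PowerSeries A, algebraMap (PowerSeries A) F y = z := by
  classical
  -- common denominator
  obtain ⟨s, hs⟩ := hz.fg_adjoin_singleton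
  obtain ⟨d, hd⟩ := IsLocalization.exist_integer_multiples_of_finset
    (nonZeroDivisors (PowerSeries A)) s
  have hdz : ∀ k : ℕ, ∃ b : PowerSeries A,
      algebraMap (PowerSeries A) F b
        = algebraMap (PowerSeries A) F (d : PowerSeries A) * z ^ k := by
    intro k
    have hmem : z ^ k ∈ Submodule.span (PowerSeries A) (s : Set F) := by
      rw [hs]
      exact Subalgebra.pow_mem _ (Algebra.self_mem_adjoin_singleton (PowerSeries A) z) k
    have hint : IsLocalization.IsInteger (PowerSeries A) ((d : PowerSeries A) • z ^ k) := by
      refine Submodule.span_induction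
        (p := fun x _ => IsLocalization.IsInteger (PowerSeries A) ((d : PowerSeries A) • x))
        (fun x hx => hd x hx) ?_ ?_ ?_ hmem
      · show IsLocalization.IsInteger (PowerSeries A) ((d : PowerSeries A) • (0 : F))
        rw [smul_zero]; exact IsLocalization.isInteger_zero
      · intro x y hx hy ihx ihy
        show IsLocalization.IsInteger (PowerSeries A) ((d : PowerSeries A) • (x + y))
        rw [smul_add]; exact IsLocalization.isInteger_add ihx ihy
      · intro r x hx ihx
        show IsLocalization.IsInteger (PowerSeries A) ((d : PowerSeries A) • (r • x))
        rw [smul_comm]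
        exact IsLocalization.isInteger_smul ihx
    obtain ⟨b, hb⟩ := hint
    exact ⟨b, by rw [hb, Algebra.smul_def]⟩
  -- embed into L
  set ρ : PowerSeries A →+* PowerSeries K :=
    PowerSeries.map (algebraMap A K) with hρ
  have hρinj : Function.Injective ρ := by
    intro a b hab
    ext n
    have h1 := congrArg (PowerSeries.coeff (R := K) n) hab
    rw [hρ] at h1
    simp only [PowerSeries.coeff_map] at h1
    exact IsFractionRing.injective A K h1
  set ε : PowerSeries A →+* L := (algebraMap (PowerSeries K) L).comp ρ with hε
  have hεinj : Function.Injective ε :=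
    (IsFractionRing.injective (PowerSeries K) L).comp hρinj
  set φ : F →+* L := IsFractionRing.lift hεinj with hφ
  have hφalg : ∀ r : PowerSeries A,
      φ (algebraMap (PowerSeries A) F r) = ε r := fun r =>
    IsFractionRing.lift_algebraMap hεinj r
  -- φ z is integral over K⟦X⟧
  obtain ⟨p, pmon, peval⟩ := hz
  have hint : IsIntegral (PowerSeries K) (φ z) := by
    refine ⟨p.map ρ, pmon.map ρ, ?_⟩
    rw [Polynomial.eval₂_map]
    have hcomp : (algebraMap (PowerSeries K) L).comp ρ
        = φ.comp (algebraMap (PowerSeries A) F) := by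
      ext r
      rw [RingHom.comp_apply, RingHom.comp_apply, hφalg, hε, RingHom.comp_apply]
    rw [hcomp, ← Polynomial.hom_eval₂, peval, map_zero]
  obtain ⟨y, hy⟩ := IsIntegrallyClosed.isIntegral_iff.mp hint
  -- transfer the almost integrality to K⟦X⟧
  have hd0 : ρ (d : PowerSeries A) ≠ 0 := fun hc =>
    nonZeroDivisors.coe_ne_zero d (hρinj (by simpa using hc))
  have hdy : ∀ k : ℕ, ∃ b : PowerSeries A,
      ρ (d : PowerSeries A) * y ^ k = PowerSeries.map (algebraMap A K) b := by
    intro k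
    obtain ⟨b, hb⟩ := hdz k
    refine ⟨b, ?_⟩
    apply IsFractionRing.injective (PowerSeries K) L
    have h2 := congrArg φ hb
    rw [hφalg, map_mul, map_pow, hφalg, ← hy, hε] at h2
    simp only [RingHom.comp_apply] at h2
    rw [map_mul, map_pow]
    exact h2.symm
  have hcoeff := aux_coeff (A := A) (ρ (d : PowerSeries A)) hd0
  -- assemble preimage
  refine ⟨PowerSeries.mk fun m => (hcoeff m y hdy).choose, ?_⟩
  have hρF0 : ρ (PowerSeries.mk fun m => (hcoeff m y hdy).choose) = y := by
    ext n
    rw [hρ]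
    simp only [PowerSeries.coeff_map, PowerSeries.coeff_mk]
    exact (hcoeff n y hdy).choose_spec
  apply φ.injective
  rw [hφalg, hε, RingHom.comp_apply, hρF0, hy]

/-- The formal power series ring over an integrally closed Noetherian domain
(e.g. a regular local ring) is integrally closed in its fraction field. -/
theorem powerSeries_isIntegrallyClosed (A : Type*) [CommRing A] [IsDomain A]
    [IsNoetherianRing A] [IsIntegrallyClosed A] :
    IsIntegrallyClosed (PowerSeries A) := by
  rw [isIntegrallyClosed_iff (FractionRing (PowerSeries A))]
  intro z hz
  exact aux_main (K := FractionRing A) (L := FractionRing (PowerSeries (FractionRing A))) z hz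
end

section
/- Let A₀ be a Noetherian local domain of dimension 1 over a field k of characteristic 0, with integral closure A (a discrete valuation ring) in Frac(A₀). Then every k-linear derivation ξ₀: A₀ → A₀ extends to a k-linear derivation ξ: A → A; equivalently, the unique extension of ξ₀ to a derivation of Frac(A₀) maps A into A. -/
open IsLocalization Finset PowerSeries

set_option linter.unusedSectionVars false
set_option linter.unusedVariables false
set_option maxHeartbeats 1000000




section ExtD

variable {k A₀ : Type*} [Field k] [CharZero k] [CommRing A₀] [IsDomain A₀] [Algebra k A₀]

local notation "K" => FractionRing A₀
local notation "ι" => algebraMap A₀ (FractionRing A₀)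

variable (ξ₀ : Derivation k A₀ A₀)

noncomputable def Dfun (z : K) : K :=
  (ι (ξ₀ (sec (nonZeroDivisors A₀) z).1) * ι ((sec (nonZeroDivisors A₀) z).2 : A₀)
    - ι (sec (nonZeroDivisors A₀) z).1 * ι (ξ₀ ((sec (nonZeroDivisors A₀) z).2 : A₀)))
    / (ι ((sec (nonZeroDivisors A₀) z).2 : A₀)) ^ 2

lemma iota_ne {q : A₀} (hq : q ∈ nonZeroDivisors A₀) : ι q ≠ 0 :=
  IsFractionRing.to_map_ne_zero_of_mem_nonZeroDivisors hq

lemma Dfun_wd (z : K) (p q : A₀) (hq : q ∈ nonZeroDivisors A₀) (hz : z * ι q = ι p) :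
    Dfun ξ₀ z = (ι (ξ₀ p) * ι q - ι p * ι (ξ₀ q)) / (ι q) ^ 2 := by
  set p' := (sec (nonZeroDivisors A₀) z).1 with hp'
  set q' := ((sec (nonZeroDivisors A₀) z).2 : A₀) with hq'
  have hq'mem : q' ∈ nonZeroDivisors A₀ := (sec (nonZeroDivisors A₀) z).2.2
  have hz' : z * ι q' = ι p' := sec_spec (nonZeroDivisors A₀) z
  have hcross : ι p * ι q' = ι p' * ι q := by
    rw [← hz, ← hz']; ring
  have hcross' : p * q' = p' * q := by
    apply IsFractionRing.injective A₀ K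
    rw [map_mul, map_mul]; exact hcross
  have e2 : ξ₀ p * q' + p * ξ₀ q' = ξ₀ p' * q + p' * ξ₀ q := by
    have := congrArg ξ₀ hcross'
    rw [Derivation.leibniz, Derivation.leibniz] at this
    simpa [smul_eq_mul, mul_comm, add_comm] using this
  have e2' : ι (ξ₀ p) * ι q' + ι p * ι (ξ₀ q') = ι (ξ₀ p') * ι q + ι p' * ι (ξ₀ q) := by
    have := congrArg (ι) e2
    simpa [map_add, map_mul] using this
  rw [Dfun, ← hp', ← hq']
  rw [div_eq_div_iff (pow_ne_zero _ (iota_ne hq'mem)) (pow_ne_zero _ (iota_ne hq))]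
  linear_combination (ι q * ι (ξ₀ q') + ι q' * ι (ξ₀ q)) * hcross - ι q * ι q' * e2'

/-- a representation for any z -/
lemma exists_rep (z : K) : ∃ p q : A₀, q ∈ nonZeroDivisors A₀ ∧ z * ι q = ι p :=
  ⟨(sec (nonZeroDivisors A₀) z).1, ((sec (nonZeroDivisors A₀) z).2 : A₀),
    (sec (nonZeroDivisors A₀) z).2.2, sec_spec (nonZeroDivisors A₀) z⟩

lemma Dfun_add (z₁ z₂ : K) : Dfun ξ₀ (z₁ + z₂) = Dfun ξ₀ z₁ + Dfun ξ₀ z₂ := by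
  obtain ⟨p₁, q₁, hq₁, hz₁⟩ := exists_rep z₁
  obtain ⟨p₂, q₂, hq₂, hz₂⟩ := exists_rep z₂
  have hq : q₁ * q₂ ∈ nonZeroDivisors A₀ := mul_mem hq₁ hq₂
  have hz : (z₁ + z₂) * ι (q₁ * q₂) = ι (p₁ * q₂ + p₂ * q₁) := by
    rw [map_mul, map_add, map_mul, map_mul, ← hz₁, ← hz₂]; ring
  rw [Dfun_wd ξ₀ _ _ _ hq hz, Dfun_wd ξ₀ _ _ _ hq₁ hz₁, Dfun_wd ξ₀ _ _ _ hq₂ hz₂]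
  have h1 : ι (ξ₀ (p₁ * q₂ + p₂ * q₁))
      = ι (ξ₀ p₁) * ι q₂ + ι p₁ * ι (ξ₀ q₂) + ι (ξ₀ p₂) * ι q₁ + ι p₂ * ι (ξ₀ q₁) := by
    rw [map_add, Derivation.leibniz, Derivation.leibniz]
    simp only [smul_eq_mul, map_add, map_mul]; ring
  have h2 : ι (ξ₀ (q₁ * q₂)) = ι (ξ₀ q₁) * ι q₂ + ι q₁ * ι (ξ₀ q₂) := by
    rw [Derivation.leibniz]; simp only [smul_eq_mul, map_add, map_mul]; ring
  have m1 : ι (p₁ * q₂ + p₂ * q₁) = ι p₁ * ι q₂ + ι p₂ * ι q₁ := by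
    rw [map_add, map_mul, map_mul]
  have m2 : ι (q₁ * q₂) = ι q₁ * ι q₂ := map_mul _ _ _
  rw [h1, h2, m1, m2, div_add_div _ _ (pow_ne_zero 2 (iota_ne hq₁)) (pow_ne_zero 2 (iota_ne hq₂)),
    div_eq_div_iff (by exact pow_ne_zero 2 (mul_ne_zero (iota_ne hq₁) (iota_ne hq₂)))
      (mul_ne_zero (pow_ne_zero 2 (iota_ne hq₁)) (pow_ne_zero 2 (iota_ne hq₂)))]
  ring

lemma Dfun_leibniz (z₁ z₂ : K) :
    Dfun ξ₀ (z₁ * z₂) = z₁ * Dfun ξ₀ z₂ + z₂ * Dfun ξ₀ z₁ := by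
  obtain ⟨p₁, q₁, hq₁, hz₁⟩ := exists_rep z₁
  obtain ⟨p₂, q₂, hq₂, hz₂⟩ := exists_rep z₂
  have hq : q₁ * q₂ ∈ nonZeroDivisors A₀ := mul_mem hq₁ hq₂
  have hz : (z₁ * z₂) * ι (q₁ * q₂) = ι (p₁ * p₂) := by
    rw [map_mul, map_mul, ← hz₁, ← hz₂]; ring
  rw [Dfun_wd ξ₀ _ _ _ hq hz, Dfun_wd ξ₀ _ _ _ hq₁ hz₁, Dfun_wd ξ₀ _ _ _ hq₂ hz₂]
  have h1 : ι (ξ₀ (p₁ * p₂)) = ι (ξ₀ p₁) * ι p₂ + ι p₁ * ι (ξ₀ p₂) := by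
    rw [Derivation.leibniz]; simp only [smul_eq_mul, map_add, map_mul]; ring
  have h2 : ι (ξ₀ (q₁ * q₂)) = ι (ξ₀ q₁) * ι q₂ + ι q₁ * ι (ξ₀ q₂) := by
    rw [Derivation.leibniz]; simp only [smul_eq_mul, map_add, map_mul]; ring
  have e₁ : z₁ = ι p₁ / ι q₁ := by
    rw [eq_div_iff (iota_ne hq₁)]; exact hz₁
  have e₂ : z₂ = ι p₂ / ι q₂ := by
    rw [eq_div_iff (iota_ne hq₂)]; exact hz₂
  have m1 : ι (p₁ * p₂) = ι p₁ * ι p₂ := map_mul _ _ _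
  have m2 : ι (q₁ * q₂) = ι q₁ * ι q₂ := map_mul _ _ _
  rw [h1, h2, m1, m2, e₁, e₂, div_mul_div_comm, div_mul_div_comm,
    div_add_div _ _ (mul_ne_zero (iota_ne hq₁) (pow_ne_zero 2 (iota_ne hq₂)))
      (mul_ne_zero (iota_ne hq₂) (pow_ne_zero 2 (iota_ne hq₁))),
    div_eq_div_iff (by exact pow_ne_zero 2 (mul_ne_zero (iota_ne hq₁) (iota_ne hq₂)))
      (mul_ne_zero (mul_ne_zero (iota_ne hq₁) (pow_ne_zero 2 (iota_ne hq₂)))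
        (mul_ne_zero (iota_ne hq₂) (pow_ne_zero 2 (iota_ne hq₁))))]
  ring

lemma algebraMap_smul_K (c : k) (p : A₀) : ι (c • p) = c • (ι p : K) := by
  rw [Algebra.smul_def, Algebra.smul_def, map_mul, ← IsScalarTower.algebraMap_apply]

lemma Dfun_smul (c : k) (z : K) : Dfun ξ₀ (c • z) = c • Dfun ξ₀ z := by
  obtain ⟨p, q, hq, hz⟩ := exists_rep z
  have hz' : (c • z) * ι q = ι (c • p) := by
    rw [algebraMap_smul_K, smul_mul_assoc, hz]
  rw [Dfun_wd ξ₀ _ _ _ hq hz', Dfun_wd ξ₀ _ _ _ hq hz, ξ₀.map_smul, algebraMap_smul_K,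
    algebraMap_smul_K, smul_mul_assoc, smul_mul_assoc, ← smul_sub, smul_div_assoc]

/-- The extension of ξ₀ to the fraction field. -/
noncomputable def extD : Derivation k K K where
  toFun := Dfun ξ₀
  map_add' := Dfun_add ξ₀
  map_smul' := fun c z => Dfun_smul ξ₀ c z
  map_one_eq_zero' := by
    have h1 : (1 : K) * ι 1 = ι 1 := by rw [map_one, mul_one]
    have := Dfun_wd ξ₀ 1 1 1 (one_mem _) h1
    simpa using this
  leibniz' := by
    intro a b
    simp only [LinearMap.coe_mk, AddHom.coe_mk, smul_eq_mul]
    rw [Dfun_leibniz]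

lemma extD_apply (z : K) : extD ξ₀ z = Dfun ξ₀ z := rfl

lemma extD_algebraMap (a : A₀) : extD ξ₀ (ι a) = ι (ξ₀ a) := by
  have h1 : (ι a : K) * ι 1 = ι a := by rw [map_one, mul_one]
  rw [extD_apply, Dfun_wd ξ₀ _ _ _ (one_mem _) h1]
  simp

end ExtD



section Flow

variable {k K : Type*} [CommRing k] [Field K] [CharZero K] [Algebra k K] (D : Derivation k K K)

lemma deriv_iterate_add (n : ℕ) (x y : K) : D^[n] (x + y) = D^[n] x + D^[n] y := by
  induction n with
  | zero => rfl
  | succ n ih =>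
    rw [Function.iterate_succ_apply', Function.iterate_succ_apply', Function.iterate_succ_apply',
      ih, map_add]

lemma deriv_iterate_leibniz (n : ℕ) (a b : K) :
    D^[n] (a * b) = ∑ i ∈ range (n + 1), n.choose i • (D^[n - i] a * D^[i] b) := by
  induction n with
  | zero => simp
  | succ n IH =>
    calc
      D^[n + 1] (a * b) =
          D (∑ i ∈ range (n + 1), n.choose i • (D^[n - i] a * D^[i] b)) := by
        rw [Function.iterate_succ_apply', IH]
      _ = (∑ i ∈ range (n + 1), n.choose i • (D^[n - i + 1] a * D^[i] b)) +
          ∑ i ∈ range (n + 1), n.choose i • (D^[n - i] a * D^[i + 1] b) := by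
        rw [map_sum]
        have : ∀ i ∈ range (n + 1),
            D (n.choose i • (D^[n - i] a * D^[i] b)) =
              n.choose i • (D^[n - i + 1] a * D^[i] b)
                + n.choose i • (D^[n - i] a * D^[i + 1] b) := by
          intro i _
          rw [map_nsmul, Derivation.leibniz, smul_eq_mul, smul_eq_mul,
            Function.iterate_succ_apply', Function.iterate_succ_apply', ← smul_add]
          ring_nf
        rw [sum_congr rfl this, sum_add_distrib]
      _ = (∑ i ∈ range (n + 1), n.choose i.succ • (D^[n - i] a * D^[i + 1] b)) +
              1 • (D^[n + 1] a * D^[0] b) +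
            ∑ i ∈ range (n + 1), n.choose i • (D^[n - i] a * D^[i + 1] b) := ?_
      _ = ((∑ i ∈ range (n + 1), n.choose i • (D^[n - i] a * D^[i + 1] b)) +
              ∑ i ∈ range (n + 1), n.choose i.succ • (D^[n - i] a * D^[i + 1] b)) +
            1 • (D^[n + 1] a * D^[0] b) := by
        rw [add_comm, add_assoc]
      _ = (∑ i ∈ range (n + 1),
              (n + 1).choose (i + 1) • (D^[n + 1 - (i + 1)] a * D^[i + 1] b)) +
            1 • (D^[n + 1] a * D^[0] b) := by
        simp_rw [Nat.choose_succ_succ, Nat.succ_sub_succ, add_smul, sum_add_distrib]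
      _ = ∑ i ∈ range (n + 2),
            (n + 1).choose i • (D^[n + 1 - i] a * D^[i] b) := by
        rw [sum_range_succ' _ (n + 1), Nat.choose_zero_right, tsub_zero]
    congr
    refine (sum_range_succ' _ _).trans (congr_arg₂ (· + ·) ?_ ?_)
    · rw [sum_range_succ, Nat.choose_succ_self, zero_smul, add_zero]
      refine sum_congr rfl fun i hi => ?_
      rw [mem_range] at hi
      have h' : n - (i + 1) + 1 = n - i := by omega
      rw [h']
    · rw [Nat.choose_zero_right, tsub_zero]

end Flow




section Flow

variable {k K : Type*} [CommRing k] [Field K] [CharZero K] [Algebra k K] (D : Derivation k K K)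

/-- divided power coefficients of the exponential flow -/
noncomputable def ec (y : K) (n : ℕ) : K := (n.factorial : K)⁻¹ * D^[n] y

lemma ec_zero (y : K) : ec D y 0 = y := by simp [ec]

lemma ec_one (y : K) : ec D y 1 = D y := by simp [ec]

lemma ec_add (x y : K) (n : ℕ) : ec D (x + y) n = ec D x n + ec D y n := by
  rw [ec, ec, ec, deriv_iterate_add, mul_add]

lemma factorial_ne (n : ℕ) : (n.factorial : K) ≠ 0 :=
  Nat.cast_ne_zero.mpr (Nat.factorial_ne_zero n)

lemma ec_mul (a b : K) (n : ℕ) :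
    ec D (a * b) n = ∑ i ∈ range (n + 1), ec D a i * ec D b (n - i) := by
  rw [ec, deriv_iterate_leibniz, ← Finset.sum_range_reflect]
  simp only [Nat.add_sub_cancel]
  rw [Finset.mul_sum]
  refine Finset.sum_congr rfl ?_
  intro i hi
  rw [mem_range] at hi
  have hle : i ≤ n := Nat.lt_succ_iff.mp hi
  have h1 : n - (n - i) = i := Nat.sub_sub_self hle
  have h2 : n.choose (n - i) = n.choose i := Nat.choose_symm hle
  rw [h1, h2, nsmul_eq_mul, ec, ec]
  have key : (n.choose i : K) * ((i.factorial : K) * ((n - i).factorial : K))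
      = (n.factorial : K) := by
    have := Nat.choose_mul_factorial_mul_factorial hle
    push_cast [← this]
    ring
  have key2 : (n.choose i : K) * (n.factorial : K)⁻¹
      = (i.factorial : K)⁻¹ * ((n - i).factorial : K)⁻¹ := by
    have hch : (n.choose i : K) ≠ 0 := Nat.cast_ne_zero.mpr (Nat.choose_pos hle).ne'
    rw [← key, mul_inv, mul_inv, ← mul_assoc, mul_inv_cancel₀ hch, one_mul]
  calc (n.factorial : K)⁻¹ * ((n.choose i : K) * ((⇑D)^[i] a * (⇑D)^[n - i] b))
      = ((n.choose i : K) * (n.factorial : K)⁻¹) * ((⇑D)^[i] a * (⇑D)^[n - i] b) := by ring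
    _ = ((i.factorial : K)⁻¹ * ((n - i).factorial : K)⁻¹)
          * ((⇑D)^[i] a * (⇑D)^[n - i] b) := by rw [key2]
    _ = (i.factorial : K)⁻¹ * (⇑D)^[i] a * ((((n - i).factorial : K))⁻¹ * (⇑D)^[n - i] b) := by
          ring

/-- the exponential flow as a power series -/
noncomputable def expS (y : K) : PowerSeries K := PowerSeries.mk (ec D y)

lemma coeff_expS (y : K) (n : ℕ) : PowerSeries.coeff (R := K) n (expS D y) = ec D y n :=
  PowerSeries.coeff_mk _ _

lemma expS_mul (a b : K) : expS D (a * b) = expS D a * expS D b := by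
  ext n
  rw [coeff_expS, PowerSeries.coeff_mul, ec_mul,
    Finset.Nat.sum_antidiagonal_eq_sum_range_succ (fun x y => (PowerSeries.coeff (R := K) x (expS D a)) * (PowerSeries.coeff (R := K) y (expS D b)))]
  exact Finset.sum_congr rfl fun i _ => by rw [coeff_expS, coeff_expS]

lemma expS_one : expS D 1 = 1 := by
  ext n
  rw [coeff_expS, PowerSeries.coeff_one]
  cases n with
  | zero => simp [ec]
  | succ n =>
    have : D^[n+1] (1 : K) = 0 := by
      rw [Function.iterate_succ_apply, Derivation.map_one_eq_zero]
      induction n with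
      | zero => rfl
      | succ m ih => rw [Function.iterate_succ_apply, map_zero]; exact ih
    simp [ec, this]

lemma expS_pow (a : K) (m : ℕ) : expS D (a ^ m) = (expS D a) ^ m := by
  induction m with
  | zero => rw [pow_zero, pow_zero]; exact expS_one D
  | succ m ih => rw [pow_succ, pow_succ, expS_mul, ih]

end Flow

section Induction

variable {K : Type*} [Field K] (S : Subring K)

lemma lead_coeff (G γ : PowerSeries K) (j : ℕ)
    (hγlow : ∀ u, u < j → PowerSeries.coeff (R := K) u γ = 0) (m : ℕ) :
    PowerSeries.coeff (R := K) j (γ * G ^ m)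
      = PowerSeries.coeff (R := K) j γ * (PowerSeries.coeff (R := K) 0 G) ^ m := by
  rw [PowerSeries.coeff_mul]
  rw [Finset.sum_eq_single_of_mem ((j, 0) : ℕ × ℕ) (by simp [Finset.HasAntidiagonal.mem_antidiagonal])]
  · rw [PowerSeries.coeff_zero_eq_constantCoeff_apply, map_pow,
      ← PowerSeries.coeff_zero_eq_constantCoeff_apply]
  · intro p hp hne
    have hsum : p.1 + p.2 = j := Finset.HasAntidiagonal.mem_antidiagonal.mp hp
    have h1 : p.1 < j := by
      rcases lt_or_eq_of_le (Nat.le.intro hsum) with h | h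
      · exact h
      · exfalso; apply hne
        have : p.2 = 0 := by omega
        exact Prod.ext (by omega) this
    rw [hγlow p.1 h1, zero_mul]

lemma almost_coeff (n : ℕ) :
    ∀ (G γ : PowerSeries K) (j : ℕ),
      (∀ u, u < j → PowerSeries.coeff (R := K) u γ = 0) →
      PowerSeries.coeff (R := K) j γ ≠ 0 →
      (∀ m u : ℕ, PowerSeries.coeff (R := K) u (γ * G ^ m) ∈ S) →
      ∃ c : K, c ∈ S ∧ c ≠ 0 ∧ ∀ m : ℕ, c * (PowerSeries.coeff (R := K) n G) ^ m ∈ S := by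
  induction n with
  | zero =>
    intro G γ j hγlow hγj h
    refine ⟨PowerSeries.coeff (R := K) j γ, ?_, hγj, ?_⟩
    · have := h 0 j
      rwa [pow_zero, mul_one] at this
    · intro m
      rw [← lead_coeff G γ j hγlow m]
      exact h m j
  | succ n IH =>
    intro G γ j hγlow hγj h
    set g₀ := PowerSeries.coeff (R := K) 0 G with hg₀
    set c := PowerSeries.coeff (R := K) j γ with hc
    set G₁ := PowerSeries.mk (fun i => PowerSeries.coeff (R := K) (i + 1) G) with hG₁
    have hG : G - PowerSeries.C (R := K) g₀ = G₁ * PowerSeries.X := by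
      ext u
      cases u with
      | zero =>
        rw [map_sub, PowerSeries.coeff_zero_mul_X, PowerSeries.coeff_C, if_pos rfl,
          ← hg₀, sub_self]
      | succ u =>
        rw [map_sub, PowerSeries.coeff_succ_mul_X, PowerSeries.coeff_C,
          if_neg (Nat.succ_ne_zero u), PowerSeries.coeff_mk, sub_zero]
    set γ' := γ * PowerSeries.C (R := K) c with hγ'
    have hγ'low : ∀ u, u < j → PowerSeries.coeff (R := K) u γ' = 0 := by
      intro u hu
      rw [hγ', PowerSeries.coeff_mul_C, hγlow u hu, zero_mul]
    have hγ'j : PowerSeries.coeff (R := K) j γ' ≠ 0 := by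
      rw [hγ', PowerSeries.coeff_mul_C]
      exact mul_ne_zero hγj hγj
    have hcg : ∀ l : ℕ, c * g₀ ^ l ∈ S := by
      intro l
      have := h l j
      rwa [lead_coeff G γ j hγlow l] at this
    have h' : ∀ m u : ℕ, PowerSeries.coeff (R := K) u (γ' * G₁ ^ m) ∈ S := by
      intro m u
      have hid : (γ' * G₁ ^ m) * PowerSeries.X ^ m
          = γ * PowerSeries.C (R := K) c * (G - PowerSeries.C (R := K) g₀) ^ m := by
        rw [hG, mul_pow, hγ']; ring
      have hco : PowerSeries.coeff (R := K) u (γ' * G₁ ^ m)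
          = PowerSeries.coeff (R := K) (u + m) (γ * PowerSeries.C (R := K) c
              * (G - PowerSeries.C (R := K) g₀) ^ m) := by
        rw [← hid, PowerSeries.coeff_mul_X_pow]
      rw [hco, sub_eq_add_neg, add_pow, Finset.mul_sum, map_sum]
      apply Subring.sum_mem
      intro i _
      have hterm : γ * PowerSeries.C (R := K) c * (G ^ i * (-PowerSeries.C (R := K) g₀) ^ (m - i)
            * ((m.choose i : ℕ) : PowerSeries K))
          = (γ * G ^ i) * PowerSeries.C (R := K) (c * (-g₀) ^ (m - i) * ((m.choose i : ℕ) : K)) := by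
        have e1 : (-PowerSeries.C (R := K) g₀) ^ (m - i)
            = PowerSeries.C (R := K) ((-g₀) ^ (m - i)) := by rw [map_pow, map_neg]
        have e2 : ((m.choose i : ℕ) : PowerSeries K)
            = PowerSeries.C (R := K) ((m.choose i : ℕ) : K) := (map_natCast _ _).symm
        rw [e1, e2, map_mul, map_mul]
        ring
      rw [hterm, PowerSeries.coeff_mul_C]
      apply S.mul_mem (h i (u + m))
      apply S.mul_mem ?_ (natCast_mem S _)
      have e3 : c * (-g₀) ^ (m - i) = (-1 : K) ^ (m - i) * (c * g₀ ^ (m - i)) := by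
        rw [neg_pow]; ring
      rw [e3]
      exact S.mul_mem (S.pow_mem (S.neg_mem S.one_mem) _) (hcg (m - i))
    have := IH G₁ γ' j hγ'low hγ'j h'
    rwa [PowerSeries.coeff_mk] at this

end Induction




section Almost

variable {A₀ : Type*} [CommRing A₀] [IsDomain A₀] [IsNoetherianRing A₀]

local notation "K" => FractionRing A₀
local notation "ι" => algebraMap A₀ (FractionRing A₀)

lemma isIntegral_of_almost (c y : K) (hc : c ∈ (algebraMap A₀ (FractionRing A₀)).range)
    (hc0 : c ≠ 0) (h : ∀ m : ℕ, c * y ^ m ∈ (algebraMap A₀ (FractionRing A₀)).range) :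
    IsIntegral A₀ y := by
  have hyM : ∀ m : ℕ, y ^ m ∈ Submodule.span A₀ ({c⁻¹} : Set K) := by
    intro m
    obtain ⟨b, hb⟩ := h m
    have : y ^ m = b • c⁻¹ := by
      rw [Algebra.smul_def, hb]
      field_simp
    rw [this]
    exact Submodule.smul_mem _ _ (Submodule.mem_span_singleton_self _)
  have hle : Subalgebra.toSubmodule (Algebra.adjoin A₀ ({y} : Set K))
      ≤ Submodule.span A₀ ({c⁻¹} : Set K) := by
    rw [Algebra.adjoin_eq_span]
    apply Submodule.span_le.2
    intro z hz
    obtain ⟨m, rfl⟩ := Submonoid.mem_closure_singleton.1 hz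
    exact hyM m
  have hfg : (Subalgebra.toSubmodule (Algebra.adjoin A₀ ({y} : Set K))).FG := by
    haveI hNoeth : IsNoetherian A₀ (Submodule.span A₀ ({c⁻¹} : Set K)) :=
      isNoetherian_of_fg_of_noetherian _ (Submodule.fg_span_singleton _)
    have h1 := IsNoetherian.noetherian
      ((Subalgebra.toSubmodule (Algebra.adjoin A₀ ({y} : Set K))).comap
        (Submodule.span A₀ ({c⁻¹} : Set K)).subtype)
    have h2 := h1.map (Submodule.span A₀ ({c⁻¹} : Set K)).subtype
    rwa [Submodule.map_comap_subtype, inf_eq_right.2 hle] at h2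
  exact IsIntegral.of_mem_of_fg _ hfg y (Algebra.self_mem_adjoin_singleton A₀ y)

lemma exists_clear_denominator (x : K) (hx : IsIntegral A₀ x) :
    ∃ c : A₀, c ≠ 0 ∧ ∀ m : ℕ, ∃ b : A₀, ι c * x ^ m = ι b := by
  obtain ⟨s, hs⟩ := hx.fg_adjoin_singleton
  obtain ⟨c, hc⟩ := IsLocalization.exist_integer_multiples_of_finset (nonZeroDivisors A₀)
    (s : Finset K)
  refine ⟨(c : A₀), nonZeroDivisors.ne_zero c.2, ?_⟩
  have key : ∀ z ∈ Submodule.span A₀ (s : Set K), ∃ b : A₀, ι (c : A₀) * z = ι b := by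
    intro z hz
    induction hz using Submodule.span_induction with
    | mem w hw =>
      obtain ⟨b, hb⟩ := hc w hw
      exact ⟨b, by rw [hb, Algebra.smul_def]⟩
    | zero => exact ⟨0, by simp⟩
    | add u v _ _ hu hv =>
      obtain ⟨b₁, hb₁⟩ := hu
      obtain ⟨b₂, hb₂⟩ := hv
      exact ⟨b₁ + b₂, by rw [map_add, mul_add, hb₁, hb₂]⟩
    | smul r u _ hu =>
      obtain ⟨b, hb⟩ := hu
      refine ⟨r * b, ?_⟩
      rw [map_mul, Algebra.smul_def, ← hb]
      ring
  intro m
  apply key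
  rw [hs]
  exact Subalgebra.pow_mem _ (Algebra.self_mem_adjoin_singleton A₀ x) m

end Almost


section Main

variable {k A₀ : Type*} [Field k] [CharZero k] [CommRing A₀] [IsDomain A₀]
  [IsNoetherianRing A₀] [Algebra k A₀]

local notation "K" => FractionRing A₀
local notation "ι" => algebraMap A₀ (FractionRing A₀)

lemma charZero_frac (k : Type*) [Field k] [CharZero k] [Algebra k A₀] :
    CharZero (FractionRing A₀) := by
  haveI h0 : CharZero A₀ := charZero_of_injective_algebraMap (algebraMap k A₀).injective
  exact charZero_of_injective_algebraMap (IsFractionRing.injective A₀ (FractionRing A₀))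

variable (ξ₀ : Derivation k A₀ A₀)

lemma iterate_extD (b : A₀) (n : ℕ) : (extD ξ₀)^[n] (ι b) = ι (ξ₀^[n] b) := by
  induction n with
  | zero => rfl
  | succ n ih =>
    rw [Function.iterate_succ_apply', Function.iterate_succ_apply', ih, extD_algebraMap]

lemma ec_extD_mem (b : A₀) (n : ℕ) :
    ec (extD ξ₀) (ι b) n ∈ (algebraMap A₀ (FractionRing A₀)).range := by
  refine ⟨((n.factorial : k)⁻¹) • (ξ₀^[n] b), ?_⟩
  rw [algebraMap_smul_K, ec, iterate_extD, Algebra.smul_def, map_inv₀, map_natCast]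

lemma extD_isIntegral (x : K) (hx : IsIntegral A₀ x) : IsIntegral A₀ (extD ξ₀ x) := by
  haveI : CharZero (FractionRing A₀) := charZero_frac k
  obtain ⟨c, hc0, hcm⟩ := exists_clear_denominator x hx
  set D := extD ξ₀ with hD
  set G := expS D x with hG
  set γ := expS D (ι c) with hγ
  have hιc : (ι c : K) ≠ 0 := iota_ne (mem_nonZeroDivisors_of_ne_zero hc0)
  have hγj : PowerSeries.coeff (R := K) 0 γ ≠ 0 := by
    rw [hγ, coeff_expS, ec_zero]
    exact hιc
  have h : ∀ m u : ℕ, PowerSeries.coeff (R := K) u (γ * G ^ m)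
      ∈ ((algebraMap A₀ (FractionRing A₀)).range : Subring K) := by
    intro m u
    obtain ⟨b, hb⟩ := hcm m
    have : γ * G ^ m = expS D (ι b) := by
      rw [hγ, hG, ← expS_pow, ← expS_mul, hb]
    rw [this, coeff_expS]
    exact ec_extD_mem ξ₀ b u
  obtain ⟨c', hc'S, hc'0, h'⟩ :=
    almost_coeff ((algebraMap A₀ (FractionRing A₀)).range : Subring K) 1 G γ 0
      (fun u hu => absurd hu (Nat.not_lt_zero u)) hγj h
  rw [hG, coeff_expS, ec_one] at h'
  exact isIntegral_of_almost c' (D x) hc'S hc'0 h'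

end Main

set_option synthInstance.maxHeartbeats 400000 in
/-- Let `A₀` be a one-dimensional Noetherian local domain over a field `k` of
characteristic `0`, with integral closure `A` (a discrete valuation ring) in
`Frac A₀`. Then every `k`-linear derivation of `A₀` extends to a derivation of `A`. -/
theorem derivation_extends_to_integralClosure_dvr {k A₀ : Type*} [Field k] [CharZero k]
    [CommRing A₀] [IsDomain A₀] [IsNoetherianRing A₀] [IsLocalRing A₀] [Algebra k A₀]
    (hdim : ringKrullDim A₀ = 1)
    (hdvr : IsDiscreteValuationRing (integralClosure A₀ (FractionRing A₀)))
    (ξ₀ : Derivation k A₀ A₀) :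
    ∃ ξ : Derivation k (integralClosure A₀ (FractionRing A₀))
        (integralClosure A₀ (FractionRing A₀)),
      ∀ a : A₀, ξ (algebraMap A₀ (integralClosure A₀ (FractionRing A₀)) a)
        = algebraMap A₀ (integralClosure A₀ (FractionRing A₀)) (ξ₀ a) := by
  have hmem : ∀ x : integralClosure A₀ (FractionRing A₀),
      extD ξ₀ (x : FractionRing A₀) ∈ integralClosure A₀ (FractionRing A₀) := fun x =>
    (mem_integralClosure_iff A₀ (FractionRing A₀)).mpr (extD_isIntegral ξ₀ _ x.2)
  refine ⟨{
    toFun := fun x => ⟨extD ξ₀ (x : FractionRing A₀), hmem x⟩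
    map_add' := by
      intro x y
      apply Subtype.ext
      show extD ξ₀ ((x : FractionRing A₀) + y) = extD ξ₀ x + extD ξ₀ y
      rw [map_add]
    map_smul' := by
      intro c x
      apply Subtype.ext
      show extD ξ₀ (c • (x : FractionRing A₀)) = c • extD ξ₀ (x : FractionRing A₀)
      rw [Derivation.map_smul]
    map_one_eq_zero' := by
      apply Subtype.ext
      show extD ξ₀ ((1 : integralClosure A₀ (FractionRing A₀)) : FractionRing A₀) = 0
      rw [OneMemClass.coe_one, Derivation.map_one_eq_zero]
    leibniz' := by
      intro a b
      apply Subtype.ext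
      show extD ξ₀ ((a : FractionRing A₀) * b)
        = (a : FractionRing A₀) * extD ξ₀ b + (b : FractionRing A₀) * extD ξ₀ a
      rw [Derivation.leibniz, smul_eq_mul, smul_eq_mul] }, ?_⟩
  intro a
  apply Subtype.ext
  show extD ξ₀ ((algebraMap A₀ (integralClosure A₀ (FractionRing A₀)) a : FractionRing A₀))
    = algebraMap A₀ (FractionRing A₀) (ξ₀ a)
  have : ((algebraMap A₀ (integralClosure A₀ (FractionRing A₀)) a : FractionRing A₀))
      = algebraMap A₀ (FractionRing A₀) a := rfl
  rw [this, extD_algebraMap]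
end

section
/- Let A₀ be a Noetherian domain over a field k of characteristic 0, and A its integral closure in Frac(A₀). Then every k-linear derivation ξ of A₀ extends to a k-linear derivation of A; equivalently, the unique extension of ξ to Frac(A₀) preserves the subring A. -/
set_option linter.unusedSectionVars false

open PowerSeries Finset

section Exp

variable {k A₀ : Type*} [Field k] [CharZero k]
    [CommRing A₀] [IsDomain A₀] [Algebra k A₀]
    [Algebra k (FractionRing A₀)] [IsScalarTower k A₀ (FractionRing A₀)]
    (Ξ : Derivation k (FractionRing A₀) (FractionRing A₀))

/-- scalar `(m!)⁻¹` as an element of the fraction field. -/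
noncomputable def epsK (A₀ : Type*) [CommRing A₀] [IsDomain A₀] (k : Type*) [Field k]
    [Algebra k A₀] (m : ℕ) : FractionRing A₀ :=
  algebraMap A₀ (FractionRing A₀) (algebraMap k A₀ ((m.factorial : k))⁻¹)

/-- the image of `k` in the fraction field, as a ring hom through `A₀`. -/
noncomputable def alK (A₀ : Type*) [CommRing A₀] [IsDomain A₀] (k : Type*) [Field k]
    [Algebra k A₀] : k →+* FractionRing A₀ :=
  (algebraMap A₀ (FractionRing A₀)).comp (algebraMap k A₀)

lemma alK_injective : Function.Injective (alK A₀ k) := (alK A₀ k).injective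

lemma natCast_alK (m : ℕ) : ((m : ℕ) : FractionRing A₀) = alK A₀ k ((m : ℕ) : k) := by
  rw [map_natCast]

lemma natCast_ne_zero_K (kk : Type*) [Field kk] [CharZero kk] [Algebra kk A₀] (m : ℕ) :
    ((m + 1 : ℕ) : FractionRing A₀) ≠ 0 := by
  rw [natCast_alK (A₀ := A₀) (k := kk)]
  intro hcon
  have h0 : (alK A₀ kk) 0 = 0 := map_zero _
  have := alK_injective (k := kk) (A₀ := A₀) (hcon.trans h0.symm)
  exact Nat.cast_ne_zero.mpr (Nat.succ_ne_zero m) this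

lemma epsK_eq : ∀ m, epsK A₀ k m = alK A₀ k ((m.factorial : k))⁻¹ := fun _ => rfl

lemma epsK_zero : epsK A₀ k 0 = 1 := by
  rw [epsK_eq, Nat.factorial_zero, Nat.cast_one, inv_one, map_one]

lemma epsK_succ (m : ℕ) :
    ((m + 1 : ℕ) : FractionRing A₀) * epsK A₀ k (m + 1) = epsK A₀ k m := by
  rw [epsK_eq, epsK_eq, natCast_alK (A₀ := A₀) (k := k), ← map_mul]
  congr 1
  have h1 : ((m + 1 : ℕ) : k) ≠ 0 := Nat.cast_ne_zero.mpr (Nat.succ_ne_zero m)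
  rw [Nat.factorial_succ, Nat.cast_mul, mul_inv, ← mul_assoc, mul_inv_cancel₀ h1, one_mul]

variable (hc0 : ∀ q : k, Ξ (algebraMap A₀ (FractionRing A₀) (algebraMap k A₀ q)) = 0)

/-- Divided power of the iterated derivation. -/
noncomputable def dpowAux (m : ℕ) (y : FractionRing A₀) : FractionRing A₀ :=
  epsK A₀ k m * (Ξ^[m] y)

lemma leibnizK (a b : FractionRing A₀) : Ξ (a * b) = a * Ξ b + b * Ξ a := by
  rw [Derivation.leibniz, smul_eq_mul, smul_eq_mul]

include hc0 in
lemma dpowAux_deriv (m : ℕ) (y : FractionRing A₀) :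
    Ξ (dpowAux Ξ m y) = ((m + 1 : ℕ) : FractionRing A₀) * dpowAux Ξ (m + 1) y := by
  unfold dpowAux
  rw [leibnizK, show Ξ (epsK A₀ k m) = 0 from hc0 _, mul_zero, add_zero,
    show Ξ ((⇑Ξ)^[m] y) = (⇑Ξ)^[m + 1] y from (Function.iterate_succ_apply' (⇑Ξ) m y).symm,
    ← mul_assoc, epsK_succ]

include hc0 in
lemma dpowAux_succ (m : ℕ) (y : FractionRing A₀) :
    dpowAux Ξ (m + 1) y = ((m + 1 : ℕ) : FractionRing A₀)⁻¹ * Ξ (dpowAux Ξ m y) := by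
  rw [dpowAux_deriv Ξ hc0, ← mul_assoc,
    inv_mul_cancel₀ (natCast_ne_zero_K (A₀ := A₀) k m), one_mul]

lemma dpowAux_zeroth (y : FractionRing A₀) : dpowAux Ξ 0 y = y := by
  unfold dpowAux
  rw [epsK_zero, one_mul]
  rfl

lemma dpowAux_add (m : ℕ) (a b : FractionRing A₀) :
    dpowAux Ξ m (a + b) = dpowAux Ξ m a + dpowAux Ξ m b := by
  unfold dpowAux
  rw [show Ξ^[m] (a + b) = Ξ^[m] a + Ξ^[m] b by
    induction m with
    | zero => rfl
    | succ m ih => rw [Function.iterate_succ_apply', Function.iterate_succ_apply',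
        Function.iterate_succ_apply', ih, map_add], mul_add]

lemma dpowAux_zero_arg (m : ℕ) : dpowAux Ξ m (0 : FractionRing A₀) = 0 := by
  unfold dpowAux
  rw [Function.iterate_fixed (map_zero Ξ) m, mul_zero]

lemma dpowAux_one (m : ℕ) : dpowAux Ξ m (1 : FractionRing A₀) = if m = 0 then 1 else 0 := by
  cases m with
  | zero => rw [dpowAux_zeroth]; simp
  | succ m =>
    unfold dpowAux
    rw [Function.iterate_succ_apply, Derivation.map_one_eq_zero,
      Function.iterate_fixed (map_zero Ξ) m, mul_zero]
    simp

include hc0 in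
lemma dpowAux_mul (m : ℕ) (a b : FractionRing A₀) :
    dpowAux Ξ m (a * b) = ∑ p ∈ antidiagonal m, dpowAux Ξ p.1 a * dpowAux Ξ p.2 b := by
  induction m with
  | zero => simp [dpowAux_zeroth]
  | succ m ih =>
    have hne : ((m + 1 : ℕ) : FractionRing A₀) ≠ 0 := natCast_ne_zero_K (A₀ := A₀) k m
    rw [dpowAux_succ Ξ hc0, ih, map_sum]
    have step : ∀ p ∈ antidiagonal m,
        Ξ (dpowAux Ξ p.1 a * dpowAux Ξ p.2 b)
          = ((p.2 + 1 : ℕ) : FractionRing A₀) * (dpowAux Ξ p.1 a * dpowAux Ξ (p.2 + 1) b)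
            + ((p.1 + 1 : ℕ) : FractionRing A₀) * (dpowAux Ξ (p.1 + 1) a * dpowAux Ξ p.2 b) := by
      intro p _
      rw [leibnizK, dpowAux_deriv Ξ hc0, dpowAux_deriv Ξ hc0]
      ring
    rw [Finset.sum_congr rfl step, Finset.sum_add_distrib]
    have e1 : (∑ p ∈ antidiagonal m,
        ((p.2 + 1 : ℕ) : FractionRing A₀) * (dpowAux Ξ p.1 a * dpowAux Ξ (p.2 + 1) b))
        = ∑ p ∈ antidiagonal (m + 1),
            ((p.2 : ℕ) : FractionRing A₀) * (dpowAux Ξ p.1 a * dpowAux Ξ p.2 b) := by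
      rw [Finset.Nat.antidiagonal_succ' (n := m), Finset.sum_cons, Finset.sum_map]
      simp only [Function.Embedding.coe_prodMap, Function.Embedding.coeFn_mk,
        Function.Embedding.refl_apply, Prod.map_fst, Prod.map_snd, Nat.cast_zero, zero_mul,
        zero_add]
    have e2 : (∑ p ∈ antidiagonal m,
        ((p.1 + 1 : ℕ) : FractionRing A₀) * (dpowAux Ξ (p.1 + 1) a * dpowAux Ξ p.2 b))
        = ∑ p ∈ antidiagonal (m + 1),
            ((p.1 : ℕ) : FractionRing A₀) * (dpowAux Ξ p.1 a * dpowAux Ξ p.2 b) := by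
      rw [Finset.Nat.antidiagonal_succ (n := m), Finset.sum_cons, Finset.sum_map]
      simp only [Function.Embedding.coe_prodMap, Function.Embedding.coeFn_mk,
        Function.Embedding.refl_apply, Prod.map_fst, Prod.map_snd, Nat.cast_zero, zero_mul,
        zero_add]
    rw [e1, e2, ← Finset.sum_add_distrib]
    have e3 : ∀ p ∈ antidiagonal (m + 1),
        ((p.2 : ℕ) : FractionRing A₀) * (dpowAux Ξ p.1 a * dpowAux Ξ p.2 b)
          + ((p.1 : ℕ) : FractionRing A₀) * (dpowAux Ξ p.1 a * dpowAux Ξ p.2 b)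
        = ((m + 1 : ℕ) : FractionRing A₀) * (dpowAux Ξ p.1 a * dpowAux Ξ p.2 b) := by
      intro p hp
      rw [← add_mul, ← Nat.cast_add, add_comm p.2 p.1, Finset.HasAntidiagonal.mem_antidiagonal.mp hp]
    rw [Finset.sum_congr rfl e3, ← Finset.mul_sum, ← mul_assoc, inv_mul_cancel₀ hne, one_mul]

/-- The exponential of a derivation, as a ring homomorphism into power series. -/
noncomputable def expHom : FractionRing A₀ →+* PowerSeries (FractionRing A₀) where
  toFun y := PowerSeries.mk fun m => dpowAux Ξ m y
  map_one' := by
    ext m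
    rw [PowerSeries.coeff_mk, dpowAux_one, PowerSeries.coeff_one]
  map_mul' a b := by
    ext m
    rw [PowerSeries.coeff_mk, PowerSeries.coeff_mul, dpowAux_mul Ξ hc0]
    simp only [PowerSeries.coeff_mk]
  map_zero' := by
    ext m
    rw [PowerSeries.coeff_mk, dpowAux_zero_arg]
    simp
  map_add' a b := by
    ext m
    rw [PowerSeries.coeff_mk, dpowAux_add]
    simp [PowerSeries.coeff_mk]

lemma expHom_coeff_zero (y : FractionRing A₀) :
    PowerSeries.coeff 0 (expHom Ξ hc0 y) = y := by
  rw [expHom]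
  simp only [RingHom.coe_mk, MonoidHom.coe_mk, OneHom.coe_mk, PowerSeries.coeff_mk]
  exact dpowAux_zeroth Ξ y

lemma expHom_constantCoeff (y : FractionRing A₀) :
    PowerSeries.constantCoeff (expHom Ξ hc0 y) = y := by
  rw [← PowerSeries.coeff_zero_eq_constantCoeff_apply]
  exact expHom_coeff_zero Ξ hc0 y

lemma expHom_coeff_one (y : FractionRing A₀) :
    PowerSeries.coeff 1 (expHom Ξ hc0 y) = Ξ y := by
  rw [expHom]
  simp only [RingHom.coe_mk, MonoidHom.coe_mk, OneHom.coe_mk, PowerSeries.coeff_mk]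
  unfold dpowAux
  rw [show epsK A₀ k 1 = 1 by
    rw [epsK_eq, Nat.factorial_one, Nat.cast_one, inv_one, map_one], one_mul]
  rfl

lemma expHom_coeff (y : FractionRing A₀) (m : ℕ) :
    PowerSeries.coeff m (expHom Ξ hc0 y) = epsK A₀ k m * (Ξ^[m] y) := by
  rw [expHom]
  simp only [RingHom.coe_mk, MonoidHom.coe_mk, OneHom.coe_mk, PowerSeries.coeff_mk]
  rfl

end Exp


/-- For a Noetherian domain `A₀` over a field `k` of characteristic `0`, the unique
extension to `Frac A₀` of any `k`-linear derivation of `A₀` preserves the integral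
closure of `A₀` in `Frac A₀`. -/
theorem derivation_preserves_integralClosure {k A₀ : Type*} [Field k] [CharZero k]
    [CommRing A₀] [IsDomain A₀] [IsNoetherianRing A₀] [Algebra k A₀]
    [Algebra k (FractionRing A₀)] [IsScalarTower k A₀ (FractionRing A₀)]
    (ξ : Derivation k A₀ A₀)
    (Ξ : Derivation k (FractionRing A₀) (FractionRing A₀))
    (hΞ : ∀ a : A₀, Ξ (algebraMap A₀ (FractionRing A₀) a)
        = algebraMap A₀ (FractionRing A₀) (ξ a)) :
    ∀ x ∈ integralClosure A₀ (FractionRing A₀),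
      Ξ x ∈ integralClosure A₀ (FractionRing A₀) := by
  intro x hx
  let φ : A₀ →+* FractionRing A₀ := algebraMap A₀ (FractionRing A₀)
  have hc0 : ∀ q : k, Ξ (algebraMap A₀ (FractionRing A₀) (algebraMap k A₀ q)) = 0 := by
    intro q
    rw [hΞ, Derivation.map_algebraMap, map_zero]
  -- iterates of Ξ on the image of A₀
  have hΞit : ∀ (m : ℕ) (a : A₀), Ξ^[m] (φ a) = φ (ξ^[m] a) := by
    intro m
    induction m with
    | zero => intro a; rfl
    | succ m ih =>
      intro a
      rw [Function.iterate_succ_apply, Function.iterate_succ_apply, hΞ, ih]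
  set E : FractionRing A₀ →+* PowerSeries (FractionRing A₀) := expHom Ξ hc0 with hE
  -- E maps the image of A₀ into power series with coefficients in the image of A₀
  have hER : ∀ (a : A₀) (m : ℕ), PowerSeries.coeff m (E (φ a)) ∈ φ.range := by
    intro a m
    rw [hE, expHom_coeff, hΞit]
    refine ⟨algebraMap k A₀ ((m.factorial : k))⁻¹ * ξ^[m] a, ?_⟩
    rw [map_mul]
    rfl
  -- integrality data for x
  have hxint : IsIntegral A₀ x := hx
  obtain ⟨p, hmonic, hp0⟩ := hxint
  set n := p.natDegree with hn
  have hn1 : 1 ≤ n := by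
    by_contra hcon
    have h0 : n = 0 := by omega
    have : p = 1 := Polynomial.Monic.natDegree_eq_zero hmonic |>.mp h0
    rw [this] at hp0
    simp at hp0
  -- denominator of x
  obtain ⟨⟨a, c⟩, hca⟩ := IsLocalization.surj (nonZeroDivisors A₀) x
  -- hca : x * φ c = φ a
  set g : PowerSeries (FractionRing A₀) := E x with hg
  set β : PowerSeries (FractionRing A₀) := E (φ (c : A₀)) with hβ
  have hβg : β * g = E (φ a) := by
    rw [hβ, hg, ← map_mul, mul_comm, hca]
  -- the coefficientwise membership predicate
  have hMR_mul : ∀ ψ χ : PowerSeries (FractionRing A₀),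
      (∀ m, PowerSeries.coeff m ψ ∈ φ.range) →
      (∀ m, PowerSeries.coeff m χ ∈ φ.range) →
      (∀ m, PowerSeries.coeff m (ψ * χ) ∈ φ.range) := by
    intro ψ χ hψ hχ m
    rw [PowerSeries.coeff_mul]
    exact Subring.sum_mem _ fun q _ => Subring.mul_mem _ (hψ q.1) (hχ q.2)
  have hMR_pow : ∀ (ψ : PowerSeries (FractionRing A₀)) (j : ℕ),
      (∀ m, PowerSeries.coeff m ψ ∈ φ.range) →
      (∀ m, PowerSeries.coeff m (ψ ^ j) ∈ φ.range) := by
    intro ψ j hψ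
    induction j with
    | zero =>
      intro m
      rw [pow_zero, PowerSeries.coeff_one]
      split <;> simp [Subring.one_mem, Subring.zero_mem]
    | succ j ih =>
      intro m
      rw [pow_succ]
      exact hMR_mul _ _ ih hψ m
  -- the monic relation for g
  have hrel : g ^ n = -∑ i ∈ Finset.range n, E (φ (p.coeff i)) * g ^ i := by
    have h1 : E (Polynomial.eval₂ φ x p) = 0 := by rw [hp0, map_zero]
    rw [Polynomial.hom_eval₂] at h1
    rw [Polynomial.eval₂_eq_sum_range] at h1
    rw [Finset.sum_range_succ] at h1
    have hc : p.coeff p.natDegree = 1 := hmonic.coeff_natDegree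
    rw [hc] at h1
    simp only [map_one, one_mul] at h1
    rw [← hn] at h1
    exact eq_neg_of_add_eq_zero_right h1
  -- key: all coefficients of β^(n-1) * g^m are in the image of A₀
  have hKey : ∀ m r : ℕ,
      PowerSeries.coeff r (β ^ (n - 1) * g ^ m) ∈ φ.range := by
    intro m
    induction m using Nat.strong_induction_on with
    | _ m IH =>
      rcases lt_or_ge m n with hlt | hge
      · have hm : (n - 1 - m) + m = n - 1 := by omega
        have hsplit : β ^ (n - 1) * g ^ m = β ^ (n - 1 - m) * (β * g) ^ m := by
          rw [mul_pow, ← mul_assoc, ← pow_add, hm]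
        rw [hsplit, hβg]
        exact hMR_mul _ _ (hMR_pow _ _ (hER (c : A₀))) (hMR_pow _ _ (hER a))
      · have hsplit : β ^ (n - 1) * g ^ m = β ^ (n - 1) * g ^ (m - n) * g ^ n := by
          rw [mul_assoc, ← pow_add]
          congr 2
          omega
        rw [hsplit, hrel, mul_neg, Finset.mul_sum]
        intro r
        rw [map_neg, map_sum]
        refine Subring.neg_mem _ (Subring.sum_mem _ fun i hi => ?_)
        have hterm : β ^ (n - 1) * g ^ (m - n) * (E (φ (p.coeff i)) * g ^ i)
            = E (φ (p.coeff i)) * (β ^ (n - 1) * g ^ (m - n + i)) := by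
          rw [pow_add]
          ring
        rw [hterm]
        have hlt' : m - n + i < m := by
          have := Finset.mem_range.mp hi
          omega
        exact hMR_mul _ _ (hER _) (fun r' => IH _ hlt' r') r
  -- the subalgebra generated by x
  set B : Subalgebra A₀ (FractionRing A₀) := Algebra.adjoin A₀ {x} with hB
  have hxB : x ∈ B := Algebra.subset_adjoin rfl
  have hSB : ∀ y : FractionRing A₀, y ∈ φ.range → y ∈ B := by
    rintro y ⟨b, rfl⟩
    exact B.algebraMap_mem b
  -- h = g - C x  has zero constant coefficient
  set h : PowerSeries (FractionRing A₀) := g - PowerSeries.C x with hhdef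
  have hh0 : PowerSeries.constantCoeff h = 0 := by
    rw [hhdef, map_sub, PowerSeries.constantCoeff_C, hg, hE, expHom_constantCoeff]
    ring
  obtain ⟨w, hw⟩ := (PowerSeries.X_dvd_iff).mpr hh0
  have hw0 : PowerSeries.constantCoeff w = Ξ x := by
    have h1 : PowerSeries.coeff 1 h = Ξ x := by
      rw [hhdef, map_sub, PowerSeries.coeff_C, hg, hE, expHom_coeff_one]
      simp
    rw [hw, mul_comm, PowerSeries.coeff_succ_mul_X 0 w] at h1
    rw [← PowerSeries.coeff_zero_eq_constantCoeff_apply, h1]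
  -- computation (A): the m-th coefficient of β^(n-1) * h^m
  have hA : ∀ m : ℕ, PowerSeries.coeff m (β ^ (n - 1) * h ^ m)
      = (φ (c : A₀)) ^ (n - 1) * (Ξ x) ^ m := by
    intro m
    have e1 : β ^ (n - 1) * h ^ m = (β ^ (n - 1) * w ^ m) * PowerSeries.X ^ m := by
      rw [hw, mul_pow]
      ring
    rw [e1]
    have e2 : PowerSeries.coeff m
          ((β ^ (n - 1) * w ^ m) * PowerSeries.X ^ m)
        = PowerSeries.coeff 0 (β ^ (n - 1) * w ^ m) := by
      have e3 := PowerSeries.coeff_mul_X_pow (β ^ (n - 1) * w ^ m) m 0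
      rw [zero_add] at e3
      exact e3
    rw [e2, PowerSeries.coeff_zero_eq_constantCoeff_apply, map_mul, map_pow, map_pow, hw0, hβ,
      hE, expHom_constantCoeff]
  -- computation (B): that coefficient lies in B
  have hBmem : ∀ m : ℕ,
      PowerSeries.coeff m (β ^ (n - 1) * h ^ m) ∈ B := by
    intro m
    have hsub : h = g + (- PowerSeries.C x) := by rw [hhdef]; ring
    rw [hsub, add_pow, Finset.mul_sum, map_sum]
    refine Subalgebra.sum_mem _ fun i hi => ?_
    have e5 : β ^ (n - 1) * (g ^ i * (- PowerSeries.C x) ^ (m - i)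
          * ((m.choose i : ℕ) : PowerSeries (FractionRing A₀)))
        = (β ^ (n - 1) * g ^ i)
          * PowerSeries.C
              ((-x) ^ (m - i) * ((m.choose i : ℕ) : FractionRing A₀)) := by
      rw [show (- PowerSeries.C x) ^ (m - i)
            = PowerSeries.C ((-x) ^ (m - i)) by rw [map_pow, map_neg],
        show ((m.choose i : ℕ) : PowerSeries (FractionRing A₀))
            = PowerSeries.C ((m.choose i : ℕ) : FractionRing A₀) by
          rw [map_natCast], map_mul]
      ring
    rw [e5, PowerSeries.coeff_mul_C]
    refine Subalgebra.mul_mem _ (hSB _ (hKey i m)) (Subalgebra.mul_mem _ ?_ ?_)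
    · exact Subalgebra.pow_mem _ (Subalgebra.neg_mem _ hxB) _
    · exact Subalgebra.natCast_mem _ _
  -- combine: (φ c)^(n-1) * (Ξ x)^m ∈ B for all m
  have hcu : ∀ m : ℕ, (φ (c : A₀)) ^ (n - 1) * (Ξ x) ^ m ∈ B := by
    intro m
    rw [← hA m]
    exact hBmem m
  -- a common denominator for B
  have hBfg : (Subalgebra.toSubmodule B).FG := by
    have hxint' : IsIntegral A₀ x := hx
    exact hxint'.fg_adjoin_singleton
  obtain ⟨s, hs⟩ := hBfg
  obtain ⟨d, hd⟩ := IsLocalization.exist_integer_multiples_of_finset (nonZeroDivisors A₀) s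
  have hdB : ∀ y : FractionRing A₀, y ∈ B → φ (d : A₀) * y ∈ φ.range := by
    intro y hy
    have hy' : y ∈ Submodule.span A₀ (s : Set (FractionRing A₀)) := by
      rw [hs]
      exact hy
    clear hy
    induction hy' using Submodule.span_induction with
    | mem z hz =>
      obtain ⟨b, hb⟩ := hd z hz
      refine ⟨b, ?_⟩
      rw [show φ b = (algebraMap A₀ (FractionRing A₀)) b from rfl, hb, Algebra.smul_def]
    | zero => exact ⟨0, by rw [map_zero, mul_zero]⟩
    | add y₁ y₂ _ _ ih1 ih2 =>
      obtain ⟨b1, hb1⟩ := ih1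
      obtain ⟨b2, hb2⟩ := ih2
      exact ⟨b1 + b2, by rw [map_add, hb1, hb2, mul_add]⟩
    | smul r y₁ _ ih1 =>
      obtain ⟨b1, hb1⟩ := ih1
      refine ⟨r * b1, ?_⟩
      rw [map_mul, hb1, Algebra.smul_def]
      ring
  -- the element e = d * c^(n-1) is a universal denominator for powers of Ξ x
  set u : FractionRing A₀ := Ξ x with hu
  set e : A₀ := (d : A₀) * (c : A₀) ^ (n - 1) with he
  have hiu : ∀ m : ℕ, ∃ z : A₀, φ z = φ e * u ^ m := by
    intro m
    obtain ⟨z, hz⟩ := hdB _ (hcu m)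
    refine ⟨z, ?_⟩
    rw [hz, he, map_mul, map_pow]
    ring
  have he0 : e ≠ 0 := by
    have hd0 : (d : A₀) ≠ 0 := nonZeroDivisors.coe_ne_zero d
    have hc0' : (c : A₀) ≠ 0 := nonZeroDivisors.coe_ne_zero c
    exact mul_ne_zero hd0 (pow_ne_zero _ hc0')
  have hφe : φ e ≠ 0 := fun hcon =>
    he0 (IsFractionRing.injective A₀ (FractionRing A₀) (by rw [hcon, map_zero]))
  -- almost integrality + Noetherian ⇒ integral
  set N : Submodule A₀ (FractionRing A₀) := Submodule.span A₀ {(φ e)⁻¹} with hN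
  have hpowN : ∀ m : ℕ, u ^ m ∈ N := by
    intro m
    obtain ⟨z, hz⟩ := hiu m
    have hum : u ^ m = z • (φ e)⁻¹ := by
      rw [Algebra.smul_def, show (algebraMap A₀ (FractionRing A₀)) z = φ z from rfl, hz]
      field_simp
    rw [hum]
    exact Submodule.smul_mem _ _ (Submodule.mem_span_singleton_self _)
  set S' : Subalgebra A₀ (FractionRing A₀) := Algebra.adjoin A₀ {u} with hS'
  have hS'N : Subalgebra.toSubmodule S' ≤ N := by
    intro y hy
    have hy' : y ∈ Algebra.adjoin A₀ {u} := hy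
    rw [Algebra.adjoin_singleton_eq_range_aeval] at hy'
    obtain ⟨q, hq⟩ := hy'
    rw [← hq]
    show (Polynomial.aeval u) q ∈ N
    rw [Polynomial.aeval_eq_sum_range]
    exact Submodule.sum_mem _ fun i _ => Submodule.smul_mem _ _ (hpowN i)
  have hNfg : N.FG := ⟨{(φ e)⁻¹}, by rw [hN, Finset.coe_singleton]⟩
  have hNoeth : IsNoetherian A₀ ↥N := isNoetherian_of_fg_of_noetherian N hNfg
  have hS'fg : (Subalgebra.toSubmodule S').FG := by
    have h1 : (Submodule.comap N.subtype (Subalgebra.toSubmodule S')).FG :=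
      IsNoetherian.noetherian _
    have h2 := h1.map N.subtype
    rw [Submodule.map_comap_subtype, inf_eq_right.mpr hS'N] at h2
    exact h2
  exact IsIntegral.of_mem_of_fg S' hS'fg u (Algebra.subset_adjoin rfl)
end
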